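/- For any rational numbers x_1, …, x_n, the determinant of the n×n matrix whose (i,j) entry is the generalized binomial coefficient C(x_i, j−1), for 1 ≤ i, j ≤ n, equals ∏_{1 ≤ i < j ≤ n} (x_j − x_i)/(j − i). -/

import Mathlib

/-- The generalized binomial coefficient `C(x, j) = x(x-1)⋯(x-j+1)/j!` for `x : ℚ`
(with `C(x, 0) = 1`). -/
def qBinom (x : ℚ) (j : ℕ) : ℚ :=
  (∏ k ∈ Finset.range j, (x - k)) / (Nat.factorial j)

open Finset Polynomial

lemma descPochhammer_eval_eq_prod (j : ℕ) (x : ℚ) :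
    (descPochhammer ℚ j).eval x = ∏ k ∈ Finset.range j, (x - k) := by
  induction j with
  | zero => simp
  | succ j ih => rw [descPochhammer_succ_eval, ih, Finset.prod_range_succ]

lemma prod_range_sub_eq_factorial (m : ℕ) :
    ∏ k ∈ Finset.range m, ((m : ℚ) - k) = Nat.factorial m := by
  have h : ∀ k ∈ Finset.range m, ((m : ℚ) - k) = ((m - k : ℕ) : ℚ) := by
    intro k hk
    rw [Nat.cast_sub (le_of_lt (Finset.mem_range.mp hk))]
  rw [Finset.prod_congr rfl h, ← Nat.cast_prod]
  congr 1
  calc ∏ k ∈ Finset.range m, (m - k) = ∏ k ∈ Finset.range m, (k + 1) := by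
        rw [← Finset.prod_range_reflect]
        refine Finset.prod_congr rfl fun k hk => ?_
        have := Finset.mem_range.mp hk
        omega
    _ = Nat.factorial m := Finset.prod_range_add_one_eq_factorial m

lemma prod_Iio_sub_eq_factorial {n : ℕ} (j : Fin n) :
    ∏ i ∈ Finset.Iio j, (((j : ℕ) : ℚ) - ((i : ℕ) : ℚ)) = Nat.factorial (j : ℕ) := by
  rw [← prod_range_sub_eq_factorial (j : ℕ), ← Nat.Iio_eq_range,
    ← Fin.map_valEmbedding_Iio, Finset.prod_map]
  rfl

/-- For rational numbers `x 0, …, x (n-1)` (representing `x_1, …, x_n`), the determinant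
of the matrix with entries `C(x_i, j-1)`, `1 ≤ i, j ≤ n`, equals
`∏_{1 ≤ i < j ≤ n} (x_j - x_i)/(j - i)`. -/
theorem stmt2 (n : ℕ) (x : Fin n → ℚ) :
    Matrix.det (Matrix.of fun i j : Fin n => qBinom (x i) (j : ℕ)) =
      ∏ j : Fin n, ∏ i ∈ Finset.Iio j, (x j - x i) / (((j : ℕ) : ℚ) - ((i : ℕ) : ℚ)) := by
  -- rewrite entries as eval of descPochhammer times inverse factorial
  have hM : (Matrix.of fun i j : Fin n => qBinom (x i) (j : ℕ)) =
      Matrix.of fun i j : Fin n =>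
        ((Nat.factorial (j : ℕ) : ℚ))⁻¹ * (descPochhammer ℚ (j : ℕ)).eval (x i) := by
    ext i j
    simp [qBinom, descPochhammer_eval_eq_prod, div_eq_inv_mul]
  rw [hM]
  rw [Matrix.det_mul_row (fun j : Fin n => ((Nat.factorial (j : ℕ) : ℚ))⁻¹)
    (fun i j : Fin n => (descPochhammer ℚ (j : ℕ)).eval (x i))]
  rw [show (Matrix.det fun i j : Fin n => (descPochhammer ℚ (j : ℕ)).eval (x i)) =
      (Matrix.vandermonde x).det from
      (Matrix.det_eval_matrixOfPolynomials_eq_det_vandermonde x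
        (fun i : Fin n => descPochhammer ℚ (i : ℕ))
        (fun i => descPochhammer_natDegree ℚ (i : ℕ))
        (fun i => monic_descPochhammer ℚ (i : ℕ))).symm]
  rw [Matrix.det_vandermonde]
  have hden : ∀ j : Fin n, ∏ i ∈ Finset.Iio j, (((j : ℕ) : ℚ) - ((i : ℕ) : ℚ)) =
      (Nat.factorial (j : ℕ) : ℚ) := prod_Iio_sub_eq_factorial
  have hrhs : (∏ j : Fin n, ∏ i ∈ Finset.Iio j, (x j - x i) / (((j : ℕ) : ℚ) - ((i : ℕ) : ℚ))) =
      (∏ j : Fin n, ∏ i ∈ Finset.Iio j, (x j - x i)) /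
        ∏ j : Fin n, (Nat.factorial (j : ℕ) : ℚ) := by
    rw [← Finset.prod_div_distrib]
    refine Finset.prod_congr rfl fun j _ => ?_
    rw [Finset.prod_div_distrib, hden j]
  rw [hrhs]
  have hswap : (∏ j : Fin n, ∏ i ∈ Finset.Iio j, (x j - x i)) =
      ∏ i : Fin n, ∏ j ∈ Finset.Ioi i, (x j - x i) :=
    Finset.prod_comm' (fun j i => by simp [Finset.mem_Iio, Finset.mem_Ioi])
  rw [hswap]
  have hfac : (∏ j : Fin n, (Nat.factorial (j : ℕ) : ℚ)) ≠ 0 :=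
    Finset.prod_ne_zero_iff.mpr fun j _ => Nat.cast_ne_zero.mpr (Nat.factorial_ne_zero _)
  field_simp
  rw [mul_right_comm, ← Finset.prod_mul_distrib, Finset.prod_eq_one (fun j _ =>
    one_div_mul_cancel (Nat.cast_ne_zero.mpr (Nat.factorial_ne_zero _))), one_mul]
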